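/- In the formal power series ring R = ℝ[[x,y]] with maximal ideal m = (x,y), the ideal I = (x³, x²y, x² + y²) satisfies: (I :_R z) = (I :_R m) = m² for every z ∈ m ∖ m²; I is integrally closed; and I is not a power of m. In particular, an integrally closed m-primary ideal of a two-dimensional regular local ring can be contracted from R[m/z] for every z ∈ m ∖ m² without being a power of m. -/

import Mathlib

/-- `a` is integral over the ideal `I`: it satisfies an equation
`a^k + c₁ a^(k-1) + ⋯ + c_k = 0` with `cᵢ ∈ Iⁱ`. -/
def IsIntegralOverIdeal {A : Type*} [CommRing A] (I : Ideal A) (a : A) : Prop :=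
  ∃ (k : ℕ) (c : ℕ → A), 0 < k ∧ (∀ i ∈ Finset.Icc 1 k, c i ∈ I ^ i) ∧
    a ^ k + ∑ i ∈ Finset.Icc 1 k, c i * a ^ (k - i) = 0

open MvPowerSeries Finsupp
noncomputable section
namespace S5
abbrev R := MvPowerSeries (Fin 2) ℝ
def xx : R := X 0
def yy : R := X 1
def mm : Ideal R := Ideal.span {xx, yy}
def II : Ideal R := Ideal.span {xx ^ 3, xx ^ 2 * yy, xx ^ 2 + yy ^ 2}
def fe (a b : ℕ) : Fin 2 →₀ ℕ := single 0 a + single 1 b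
def deg (d : Fin 2 →₀ ℕ) : ℕ := d 0 + d 1

lemma fe_apply0 (a b : ℕ) : fe a b 0 = a := by simp [fe, Finsupp.single_apply]
lemma fe_apply1 (a b : ℕ) : fe a b 1 = b := by simp [fe, Finsupp.single_apply]
lemma fe_spec (d : Fin 2 →₀ ℕ) : fe (d 0) (d 1) = d := by
  ext i; fin_cases i <;> simp [fe, Finsupp.single_apply]
lemma deg_fe (a b : ℕ) : deg (fe a b) = a + b := by simp [deg, fe_apply0, fe_apply1]
lemma deg_add (d e : Fin 2 →₀ ℕ) : deg (d + e) = deg d + deg e := by simp [deg]; ring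
lemma fe_add (a b c d : ℕ) : fe a b + fe c d = fe (a + c) (b + d) := by
  ext i; fin_cases i <;> simp [fe, Finsupp.single_apply]
lemma fe_inj {a b c d : ℕ} : fe a b = fe c d ↔ a = c ∧ b = d := by
  constructor
  · intro h
    exact ⟨by rw [← fe_apply0 a b, h, fe_apply0], by rw [← fe_apply1 a b, h, fe_apply1]⟩
  · rintro ⟨rfl, rfl⟩; rfl

def J (n : ℕ) : Ideal R where
  carrier := {f | ∀ d, deg d < n → MvPowerSeries.coeff d f = 0}
  add_mem' hf hg d hd := by simp [hf d hd, hg d hd]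
  zero_mem' d hd := by simp
  smul_mem' c f hf := by
    intro d hd
    rw [smul_eq_mul, coeff_mul]
    refine Finset.sum_eq_zero fun p hp => ?_
    rw [Finset.HasAntidiagonal.mem_antidiagonal] at hp
    have : deg p.2 < n := by
      have := deg_add p.1 p.2; rw [hp] at this; omega
    rw [hf p.2 this, mul_zero]

lemma mem_J {n : ℕ} {f : R} : f ∈ J n ↔ ∀ d, deg d < n → MvPowerSeries.coeff d f = 0 :=
  Iff.rfl

lemma mul_mem_J {p q : ℕ} {f g : R} (hf : f ∈ J p) (hg : g ∈ J q) : f * g ∈ J (p + q) := by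
  intro d hd
  rw [coeff_mul]
  refine Finset.sum_eq_zero fun pr hpr => ?_
  rw [Finset.HasAntidiagonal.mem_antidiagonal] at hpr
  have hsum : deg pr.1 + deg pr.2 < p + q := by
    have := deg_add pr.1 pr.2; rw [hpr] at this; omega
  rcases lt_or_ge (deg pr.1) p with h | h
  · rw [hf pr.1 h, zero_mul]
  · rw [hg pr.2 (by omega), mul_zero]

lemma xx_mem_J1 : xx ∈ J 1 := by
  intro d hd
  rw [xx, coeff_X, if_neg]
  rintro rfl
  simp [deg, Finsupp.single_apply] at hd
lemma yy_mem_J1 : yy ∈ J 1 := by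
  intro d hd
  rw [yy, coeff_X, if_neg]
  rintro rfl
  simp [deg, Finsupp.single_apply] at hd

lemma mm_le_J1 : mm ≤ J 1 := by
  rw [mm, Ideal.span_le]
  rintro f (rfl | rfl)
  exacts [xx_mem_J1, yy_mem_J1]

lemma pow_le_J : ∀ n, mm ^ n ≤ J n := by
  intro n
  induction n with
  | zero => intro f _ d hd; omega
  | succ n ih =>
    rw [pow_succ]
    refine Ideal.mul_le.mpr fun r hr s hs => ?_
    exact mul_mem_J (ih hr) (mm_le_J1 hs)

lemma single_le_d {s : Fin 2} {d : Fin 2 →₀ ℕ} : single s 1 ≤ d ↔ 1 ≤ d s := by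
  rw [Finsupp.single_le_iff]

lemma J_step {n : ℕ} {f : R} (hf : f ∈ J (n + 1)) :
    ∃ A B, A ∈ J n ∧ B ∈ J n ∧ f = xx * A + yy * B := by
  classical
  refine ⟨(fun d => MvPowerSeries.coeff (d + single 0 1) f : R),
    (fun d => if d 0 = 0 then MvPowerSeries.coeff (d + single 1 1) f else 0 : R), ?_, ?_, ?_⟩
  · intro d hd
    simp only [deg] at hd
    erw [coeff_apply]
    refine hf _ ?_
    simp only [deg, Finsupp.add_apply, Finsupp.single_apply]
    simp only [Fin.isValue, if_true, if_neg (by decide : ¬ ((0:Fin 2) = 1))]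
    omega
  · intro d hd
    simp only [deg] at hd
    erw [coeff_apply]
    split
    · refine hf _ ?_
      simp only [deg, Finsupp.add_apply, Finsupp.single_apply]
      simp only [Fin.isValue, if_true, if_neg (by decide : ¬ ((1:Fin 2) = 0))]
      omega
    · rfl
  · ext d
    erw [map_add, xx, yy, X, X, coeff_monomial_mul, coeff_monomial_mul]
    simp only [coeff_apply, one_mul]
    erw [coeff_apply, coeff_apply]
    beta_reduce
    by_cases h0 : d 0 = 0
    · rw [if_neg (by rw [single_le_d]; omega)]
      by_cases h1 : d 1 = 0
      · rw [if_neg (by rw [single_le_d]; omega)]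
        have hd0 : d = 0 := by
          ext i; fin_cases i
          · simpa using h0
          · simpa using h1
        subst hd0
        have := hf 0 (by simp [deg])
        rw [coeff_apply] at this
        simpa using this
      · rw [if_pos (by rw [single_le_d]; omega)]
        have hsub0 : (d - single 1 1 : Fin 2 →₀ ℕ) 0 = 0 := by
          simp [Finsupp.tsub_apply, Finsupp.single_apply, h0]
        rw [if_pos hsub0, tsub_add_cancel_of_le (single_le_d.mpr (by omega))]
        simp
    · rw [if_pos (by rw [single_le_d]; omega),
        tsub_add_cancel_of_le (single_le_d.mpr (by omega))]
      by_cases h1 : d 1 = 0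
      · rw [if_neg (by rw [single_le_d]; omega), add_zero]
      · rw [if_pos (by rw [single_le_d]; omega)]
        have hsub0 : (d - single 1 1 : Fin 2 →₀ ℕ) 0 ≠ 0 := by
          simp [Finsupp.tsub_apply, Finsupp.single_apply]
          omega
        rw [if_neg hsub0, add_zero]

lemma J_le_pow : ∀ n, J n ≤ mm ^ n := by
  intro n
  induction n with
  | zero => intro f _; simp
  | succ n ih =>
    intro f hf
    obtain ⟨A, B, hA, hB, rfl⟩ := J_step hf
    rw [pow_succ']
    exact add_mem (Ideal.mul_mem_mul (Ideal.subset_span (by simp [mm])) (ih hA))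
      (Ideal.mul_mem_mul (Ideal.subset_span (by simp [mm])) (ih hB))

lemma mem_pow_iff {n : ℕ} {f : R} : f ∈ mm ^ n ↔ f ∈ J n :=
  ⟨fun h => pow_le_J n h, fun h => J_le_pow n h⟩
def phi : R →+* PowerSeries ℂ where
  toFun f := PowerSeries.mk fun n => ∑ p ∈ Finset.HasAntidiagonal.antidiagonal n,
    ((MvPowerSeries.coeff (fe p.1 p.2) f : ℝ) : ℂ) * Complex.I ^ p.2
  map_zero' := by ext n; simp
  map_add' f g := by
    ext n
    simp only [PowerSeries.coeff_mk, map_add, PowerSeries.coeff_mk, Complex.ofReal_add,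
      add_mul, map_add]
    rw [Finset.sum_add_distrib]
  map_one' := by
    ext n
    rw [PowerSeries.coeff_mk, PowerSeries.coeff_one]
    classical
    have h : ∀ p ∈ Finset.HasAntidiagonal.antidiagonal n,
        ((MvPowerSeries.coeff (fe p.1 p.2) (1 : R) : ℝ) : ℂ) * Complex.I ^ p.2
          = if p = ((0 : ℕ), (0 : ℕ)) then 1 else 0 := by
      rintro ⟨a, b⟩ _
      rw [MvPowerSeries.coeff_one]
      have : fe a b = 0 ↔ a = 0 ∧ b = 0 := by
        rw [show (0 : Fin 2 →₀ ℕ) = fe 0 0 by simp [fe], fe_inj]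
      have hfe : fe a b = 0 ↔ a = 0 ∧ b = 0 := by
        rw [show (0 : Fin 2 →₀ ℕ) = fe 0 0 by simp [fe], fe_inj]
      split_ifs with h1 h2 h2
      · obtain ⟨rfl, rfl⟩ : a = 0 ∧ b = 0 := by
          simpa [Prod.ext_iff] using h2
        simp
      · exact absurd (by simpa [Prod.ext_iff] using hfe.mp h1) h2
      · obtain ⟨rfl, rfl⟩ : a = 0 ∧ b = 0 := by
          simpa [Prod.ext_iff] using h2
        exact absurd (hfe.mpr ⟨rfl, rfl⟩) h1
      · simp
    rw [Finset.sum_congr rfl h, Finset.sum_ite_eq' (Finset.HasAntidiagonal.antidiagonal n) ((0:ℕ),(0:ℕ))]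
    simp [Finset.HasAntidiagonal.mem_antidiagonal, eq_comm]
  map_mul' f g := by
    classical
    ext n
    rw [PowerSeries.coeff_mul]
    simp only [PowerSeries.coeff_mk]
    calc ∑ p ∈ Finset.HasAntidiagonal.antidiagonal n,
          ((MvPowerSeries.coeff (fe p.1 p.2) (f * g) : ℝ) : ℂ) * Complex.I ^ p.2
        = ∑ p ∈ Finset.HasAntidiagonal.antidiagonal n, ∑ q ∈ Finset.HasAntidiagonal.antidiagonal (fe p.1 p.2),
            ((MvPowerSeries.coeff q.1 f : ℝ) : ℂ) * ((MvPowerSeries.coeff q.2 g : ℝ) : ℂ)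
              * Complex.I ^ p.2 := by
          refine Finset.sum_congr rfl fun p _ => ?_
          rw [MvPowerSeries.coeff_mul]
          push_cast
          rw [Finset.sum_mul]
      _ = ∑ x ∈ (Finset.HasAntidiagonal.antidiagonal n).sigma
            (fun p => Finset.HasAntidiagonal.antidiagonal (fe p.1 p.2)),
            ((MvPowerSeries.coeff x.2.1 f : ℝ) : ℂ) * ((MvPowerSeries.coeff x.2.2 g : ℝ) : ℂ)
              * Complex.I ^ x.1.2 := by
          rw [Finset.sum_sigma]
      _ = ∑ x ∈ (Finset.HasAntidiagonal.antidiagonal n).sigma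
            (fun uv => Finset.HasAntidiagonal.antidiagonal uv.1 ×ˢ Finset.HasAntidiagonal.antidiagonal uv.2),
            (((MvPowerSeries.coeff (fe x.2.1.1 x.2.1.2) f : ℝ) : ℂ) * Complex.I ^ x.2.1.2)
              * (((MvPowerSeries.coeff (fe x.2.2.1 x.2.2.2) g : ℝ) : ℂ) * Complex.I ^ x.2.2.2) := by
          refine Finset.sum_nbij'
            (fun x => ⟨(deg x.2.1, deg x.2.2), ((x.2.1 0, x.2.1 1), (x.2.2 0, x.2.2 1))⟩)
            (fun y => ⟨(y.2.1.1 + y.2.2.1, y.2.1.2 + y.2.2.2), (fe y.2.1.1 y.2.1.2, fe y.2.2.1 y.2.2.2)⟩)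
            ?_ ?_ ?_ ?_ ?_
          · rintro ⟨⟨a, b⟩, p, q⟩ hx
            simp only [Finset.mem_sigma, Finset.HasAntidiagonal.mem_antidiagonal, Finset.HasAntidiagonal.mem_antidiagonal,
              Finset.mem_product] at hx ⊢
            obtain ⟨hab, hpq⟩ := hx
            have := deg_add p q
            rw [hpq, deg_fe] at this
            exact ⟨by simp [deg] at this ⊢; omega, rfl, rfl⟩
          · rintro ⟨⟨u, v⟩, ⟨a1, b1⟩, ⟨a2, b2⟩⟩ hy
            simp only [Finset.mem_sigma, Finset.HasAntidiagonal.mem_antidiagonal, Finset.HasAntidiagonal.mem_antidiagonal,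
              Finset.mem_product] at hy ⊢
            obtain ⟨huv, h1, h2⟩ := hy
            constructor
            · omega
            · rw [fe_add]
          · rintro ⟨⟨a, b⟩, p, q⟩ hx
            simp only [Finset.mem_sigma, Finset.HasAntidiagonal.mem_antidiagonal, Finset.HasAntidiagonal.mem_antidiagonal] at hx
            obtain ⟨hab, hpq⟩ := hx
            have h0 : p 0 + q 0 = a := by
              rw [← fe_apply0 a b, ← hpq]; simp
            have h1 : p 1 + q 1 = b := by
              rw [← fe_apply1 a b, ← hpq]; simp
            simp only [Sigma.mk.inj_iff, Prod.mk.injEq, heq_eq_eq]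
            exact ⟨⟨by simp [deg, h0, h1], by simp [deg, h0, h1]⟩, fe_spec p, fe_spec q⟩
          · rintro ⟨⟨u, v⟩, ⟨a1, b1⟩, ⟨a2, b2⟩⟩ hy
            simp only [Finset.mem_sigma, Finset.HasAntidiagonal.mem_antidiagonal, Finset.mem_product] at hy
            obtain ⟨huv, h1, h2⟩ := hy
            simp only [Sigma.mk.inj_iff, Prod.mk.injEq, heq_eq_eq]
            exact ⟨⟨by rw [deg_fe, h1], by rw [deg_fe, h2]⟩,
              ⟨fe_apply0 _ _, fe_apply1 _ _⟩, fe_apply0 _ _, fe_apply1 _ _⟩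
          · rintro ⟨⟨a, b⟩, p, q⟩ hx
            simp only [Finset.mem_sigma, Finset.HasAntidiagonal.mem_antidiagonal, Finset.HasAntidiagonal.mem_antidiagonal] at hx
            obtain ⟨hab, hpq⟩ := hx
            have h1 : p 1 + q 1 = b := by
              rw [← fe_apply1 a b, ← hpq]; simp
            rw [fe_spec, fe_spec, ← h1, pow_add]
            ring
      _ = ∑ uv ∈ Finset.HasAntidiagonal.antidiagonal n,
            (∑ c ∈ Finset.HasAntidiagonal.antidiagonal uv.1,
              ((MvPowerSeries.coeff (fe c.1 c.2) f : ℝ) : ℂ) * Complex.I ^ c.2) *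
            (∑ e ∈ Finset.HasAntidiagonal.antidiagonal uv.2,
              ((MvPowerSeries.coeff (fe e.1 e.2) g : ℝ) : ℂ) * Complex.I ^ e.2) := by
          rw [Finset.sum_sigma]
          refine Finset.sum_congr rfl fun uv _ => ?_
          rw [Finset.sum_mul_sum, Finset.sum_product]

lemma coeff_phi (f : R) (n : ℕ) : PowerSeries.coeff n (phi f) = ∑ p ∈ Finset.HasAntidiagonal.antidiagonal n,
    ((MvPowerSeries.coeff (fe p.1 p.2) f : ℝ) : ℂ) * Complex.I ^ p.2 := by
  show PowerSeries.coeff n (PowerSeries.mk fun n => ∑ p ∈ Finset.HasAntidiagonal.antidiagonal n,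
    ((MvPowerSeries.coeff (fe p.1 p.2) f : ℝ) : ℂ) * Complex.I ^ p.2) = _
  rw [PowerSeries.coeff_mk]


lemma phi_xx : phi xx = PowerSeries.X := by
  ext n
  rw [coeff_phi, PowerSeries.coeff_X]
  classical
  have h : ∀ p ∈ Finset.HasAntidiagonal.antidiagonal n,
      ((MvPowerSeries.coeff (fe p.1 p.2) xx : ℝ) : ℂ) * Complex.I ^ p.2
        = if p = ((1 : ℕ), (0 : ℕ)) then 1 else 0 := by
    rintro ⟨a, b⟩ _
    rw [xx, MvPowerSeries.coeff_X]
    have hfe : fe a b = single (0 : Fin 2) 1 ↔ a = 1 ∧ b = 0 := by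
      rw [show single (0 : Fin 2) 1 = fe 1 0 by simp [fe], fe_inj]
    split_ifs with h1 h2 h2
    · obtain ⟨rfl, rfl⟩ := hfe.mp h1; simp
    · exact absurd (by simpa [Prod.ext_iff] using hfe.mp h1) h2
    · obtain ⟨rfl, rfl⟩ : a = 1 ∧ b = 0 := by simpa [Prod.ext_iff] using h2
      exact absurd (hfe.mpr ⟨rfl, rfl⟩) h1
    · simp
  rw [Finset.sum_congr rfl h, Finset.sum_ite_eq' (Finset.HasAntidiagonal.antidiagonal n) ((1:ℕ),(0:ℕ))]
  by_cases hn : n = 1 <;> simp [Finset.HasAntidiagonal.mem_antidiagonal, hn, eq_comm]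

lemma phi_yy : phi yy = Complex.I • PowerSeries.X := by
  ext n
  rw [coeff_phi, map_smul, PowerSeries.coeff_X]
  classical
  have h : ∀ p ∈ Finset.HasAntidiagonal.antidiagonal n,
      ((MvPowerSeries.coeff (fe p.1 p.2) yy : ℝ) : ℂ) * Complex.I ^ p.2
        = if p = ((0 : ℕ), (1 : ℕ)) then Complex.I else 0 := by
    rintro ⟨a, b⟩ _
    rw [yy, MvPowerSeries.coeff_X]
    have hfe : fe a b = single (1 : Fin 2) 1 ↔ a = 0 ∧ b = 1 := by
      rw [show single (1 : Fin 2) 1 = fe 0 1 by simp [fe], fe_inj]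
    split_ifs with h1 h2 h2
    · obtain ⟨rfl, rfl⟩ := hfe.mp h1; simp
    · exact absurd (by simpa [Prod.ext_iff] using hfe.mp h1) h2
    · obtain ⟨rfl, rfl⟩ : a = 0 ∧ b = 1 := by simpa [Prod.ext_iff] using h2
      exact absurd (hfe.mpr ⟨rfl, rfl⟩) h1
    · simp
  rw [Finset.sum_congr rfl h, Finset.sum_ite_eq' (Finset.HasAntidiagonal.antidiagonal n) ((0:ℕ),(1:ℕ))]
  by_cases hn : n = 1 <;> simp [Finset.HasAntidiagonal.mem_antidiagonal, hn, eq_comm]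

lemma phi_II_le : Ideal.map phi II ≤ Ideal.span {(PowerSeries.X : PowerSeries ℂ) ^ 3} := by
  rw [II, Ideal.map_span, Ideal.span_le]
  rintro f hf
  simp only [Set.mem_image, Set.mem_insert_iff, Set.mem_singleton_iff] at hf
  obtain ⟨g, (rfl | rfl | rfl), rfl⟩ := hf
  · rw [map_pow, phi_xx]
    exact Ideal.subset_span rfl
  · rw [map_mul, map_pow, phi_xx, phi_yy]
    have h : (PowerSeries.X : PowerSeries ℂ) ^ 2 * (Complex.I • PowerSeries.X)
        = Complex.I • (PowerSeries.X : PowerSeries ℂ) ^ 3 := by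
      rw [mul_smul_comm, ← pow_succ]
    rw [h, PowerSeries.smul_eq_C_mul, SetLike.mem_coe, Ideal.mem_span_singleton]
    exact dvd_mul_left _ _
  · rw [map_add, map_pow, map_pow, phi_xx, phi_yy, smul_pow]
    have : (Complex.I) ^ 2 = -1 := Complex.I_sq
    rw [this, neg_one_smul, add_neg_cancel]
    exact Ideal.zero_mem _

lemma phi_mem_of_mem_II_pow {c : R} {i : ℕ} (hc : c ∈ II ^ i) :
    (PowerSeries.X : PowerSeries ℂ) ^ (3 * i) ∣ phi c := by
  have h1 : phi c ∈ Ideal.map phi (II ^ i) := Ideal.mem_map_of_mem _ hc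
  rw [Ideal.map_pow] at h1
  have h2 : Ideal.map phi II ^ i ≤ Ideal.span {(PowerSeries.X : PowerSeries ℂ) ^ 3} ^ i :=
    Ideal.pow_right_mono phi_II_le i
  have h3 := h2 h1
  rw [Ideal.span_singleton_pow, ← pow_mul] at h3
  exact (Ideal.mem_span_singleton.mp h3)

lemma keyP {p q : ℕ} {f g : PowerSeries ℂ} (hf : (PowerSeries.X : PowerSeries ℂ) ^ p ∣ f)
    (hg : (PowerSeries.X : PowerSeries ℂ) ^ q ∣ g) :
    PowerSeries.coeff (p + q) (f * g)
      = PowerSeries.coeff p f * PowerSeries.coeff q g := by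
  obtain ⟨f', rfl⟩ := hf
  obtain ⟨g', rfl⟩ := hg
  have h1 : (PowerSeries.X : PowerSeries ℂ) ^ p * f' * (PowerSeries.X ^ q * g')
      = PowerSeries.X ^ (p + q) * (f' * g') := by rw [pow_add]; ring
  rw [h1, PowerSeries.coeff_X_pow_mul', if_pos le_rfl, PowerSeries.coeff_X_pow_mul',
    if_pos le_rfl, PowerSeries.coeff_X_pow_mul', if_pos le_rfl]
  simp [PowerSeries.coeff_zero_eq_constantCoeff]

lemma keyPow {p : ℕ} {f : PowerSeries ℂ} (hf : (PowerSeries.X : PowerSeries ℂ) ^ p ∣ f) (k : ℕ) :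
    (PowerSeries.X : PowerSeries ℂ) ^ (k * p) ∣ f ^ k ∧
      PowerSeries.coeff (k * p) (f ^ k) = (PowerSeries.coeff p f) ^ k := by
  induction k with
  | zero => simp
  | succ k ih =>
    have hexp : (k + 1) * p = k * p + p := by ring
    constructor
    · rw [pow_succ f, hexp, pow_add]
      exact mul_dvd_mul ih.1 hf
    · rw [pow_succ f, hexp, keyP ih.1 hf, ih.2, pow_succ]

lemma m3_le_II : mm ^ 3 ≤ II := by
  have hx3 : xx ^ 3 ∈ II := Ideal.subset_span (by simp)
  have hx2y : xx ^ 2 * yy ∈ II := Ideal.subset_span (by simp)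
  have hs : xx ^ 2 + yy ^ 2 ∈ II := Ideal.subset_span (by simp)
  have hxy2 : xx * yy ^ 2 ∈ II := by
    have h : xx * yy ^ 2 = xx * (xx ^ 2 + yy ^ 2) - xx ^ 3 := by ring
    rw [h]
    exact sub_mem (Ideal.mul_mem_left _ _ hs) hx3
  have hy3 : yy ^ 3 ∈ II := by
    have h : yy ^ 3 = yy * (xx ^ 2 + yy ^ 2) - xx ^ 2 * yy := by ring
    rw [h]
    exact sub_mem (Ideal.mul_mem_left _ _ hs) hx2y
  rw [pow_succ]
  refine Ideal.mul_le.mpr fun r hr s hs' => ?_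
  rw [pow_two] at hr
  refine Submodule.mul_induction_on (C := fun r => r * s ∈ II) hr (fun a ha b hb => ?_)
    (fun a b h1 h2 => ?_)
  · show a * b * s ∈ II
    have ha' : a ∈ Ideal.span {xx, yy} := by rwa [mm] at ha
    have hb' : b ∈ Ideal.span {xx, yy} := by rwa [mm] at hb
    have hs'' : s ∈ Ideal.span {xx, yy} := by rwa [mm] at hs'
    obtain ⟨a1, a2, hae⟩ := Submodule.mem_span_pair.mp ha'
    obtain ⟨b1, b2, hbe⟩ := Submodule.mem_span_pair.mp hb'
    obtain ⟨c1, c2, hce⟩ := Submodule.mem_span_pair.mp hs''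
    have hexp : (a1 • xx + a2 • yy) * (b1 • xx + b2 • yy) * (c1 • xx + c2 • yy)
        = (a1 * b1 * c1) * xx ^ 3 + (a1 * b1 * c2 + a1 * b2 * c1 + a2 * b1 * c1) * (xx ^ 2 * yy)
          + (a1 * b2 * c2 + a2 * b1 * c2 + a2 * b2 * c1) * (xx * yy ^ 2)
          + (a2 * b2 * c2) * yy ^ 3 := by
      simp only [smul_eq_mul]; ring
    rw [← hae, ← hbe, ← hce, hexp]
    exact add_mem (add_mem (add_mem (Ideal.mul_mem_left _ _ hx3) (Ideal.mul_mem_left _ _ hx2y))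
      (Ideal.mul_mem_left _ _ hxy2)) (Ideal.mul_mem_left _ _ hy3)
  · show (a + b) * s ∈ II
    rw [add_mul]
    exact add_mem h1 h2

lemma II_le_J2 : II ≤ J 2 := by
  rw [II, Ideal.span_le]
  have hmono : ∀ (e : Fin 2 →₀ ℕ), deg e = 3 ∨ deg e = 2 →
      ∀ d, deg d < 2 → MvPowerSeries.coeff d (monomial e (1 : ℝ)) = 0 := by
    intro e he d hd
    rw [MvPowerSeries.coeff_monomial, if_neg]
    rintro rfl
    omega
  rintro f (rfl | rfl | rfl) <;> intro d hd
  · rw [xx, X_pow_eq]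
    exact hmono _ (Or.inl (by simp [deg, Finsupp.single_apply])) d hd
  · rw [xx, yy, X_pow_eq, X, monomial_mul_monomial, one_mul]
    exact hmono _ (Or.inl (by rw [deg_add]; simp [deg, Finsupp.single_apply])) d hd
  · rw [xx, yy, map_add, X_pow_eq, X_pow_eq,
      hmono _ (Or.inr (by simp [deg, Finsupp.single_apply])) d hd,
      hmono _ (Or.inr (by simp [deg, Finsupp.single_apply])) d hd, add_zero]


lemma coeff_phi_zero (f : R) :
    PowerSeries.coeff 0 (phi f) = ((MvPowerSeries.coeff (fe 0 0) f : ℝ) : ℂ) := by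
  rw [coeff_phi, Finset.Nat.sum_antidiagonal_eq_sum_range_succ_mk]
  simp

lemma coeff_phi_one (f : R) :
    PowerSeries.coeff 1 (phi f) = ((MvPowerSeries.coeff (fe 1 0) f : ℝ) : ℂ)
      + ((MvPowerSeries.coeff (fe 0 1) f : ℝ) : ℂ) * Complex.I := by
  rw [coeff_phi, Finset.Nat.sum_antidiagonal_eq_sum_range_succ_mk]
  rw [Finset.sum_range_succ, Finset.sum_range_one]
  norm_num [add_comm]

lemma coeff_phi_two (f : R) :
    PowerSeries.coeff 2 (phi f) = ((MvPowerSeries.coeff (fe 2 0) f : ℝ) : ℂ)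
      + ((MvPowerSeries.coeff (fe 1 1) f : ℝ) : ℂ) * Complex.I
      - ((MvPowerSeries.coeff (fe 0 2) f : ℝ) : ℂ) := by
  rw [coeff_phi, Finset.Nat.sum_antidiagonal_eq_sum_range_succ_mk]
  rw [Finset.sum_range_succ, Finset.sum_range_succ, Finset.sum_range_one]
  norm_num [Complex.I_sq]
  ring

lemma complex_split {p q : ℝ} (h : (p : ℂ) + (q : ℂ) * Complex.I = 0) : p = 0 ∧ q = 0 := by
  constructor
  · simpa using congrArg Complex.re h
  · simpa using congrArg Complex.im h

lemma mem_J2_of (u : R) (h0 : MvPowerSeries.coeff (fe 0 0) u = 0)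
    (h1 : MvPowerSeries.coeff (fe 1 0) u = 0) (h2 : MvPowerSeries.coeff (fe 0 1) u = 0) :
    u ∈ J 2 := by
  intro d hd
  simp only [deg] at hd
  have hcase : (d 0 = 0 ∧ d 1 = 0) ∨ (d 0 = 1 ∧ d 1 = 0) ∨ (d 0 = 0 ∧ d 1 = 1) := by omega
  rw [← fe_spec d]
  rcases hcase with ⟨ha, hb⟩ | ⟨ha, hb⟩ | ⟨ha, hb⟩ <;> rw [ha, hb] <;> assumption

lemma xx_not_mem_sq : xx ∉ mm ^ 2 := by
  intro h
  have h2 := pow_le_J 2 h (fe 1 0) (by rw [deg_fe]; omega)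
  rw [show fe 1 0 = single (0 : Fin 2) 1 by simp [fe], xx, MvPowerSeries.coeff_X, if_pos rfl]
    at h2
  exact one_ne_zero h2

lemma key_colon {z u : R} (hz : z ∈ mm) (hz2 : z ∉ mm ^ 2) (h : u * z ∈ II) : u ∈ mm ^ 2 := by
  have hz1 : z ∈ J 1 := mm_le_J1 hz
  have hz0 : MvPowerSeries.coeff (fe 0 0) z = 0 := hz1 _ (by rw [deg_fe]; omega)
  have hzc1 : PowerSeries.coeff 1 (phi z) ≠ 0 := by
    rw [coeff_phi_one]
    intro hc
    obtain ⟨ha, hb⟩ := complex_split hc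
    exact hz2 (J_le_pow 2 (mem_J2_of z hz0 ha hb))
  have hdvd : (PowerSeries.X : PowerSeries ℂ) ^ 3 ∣ phi u * phi z := by
    rw [← map_mul]
    have := phi_mem_of_mem_II_pow (i := 1) (by rwa [pow_one])
    rwa [mul_one] at this
  have h0 : PowerSeries.coeff 0 (phi u) = 0 := by
    by_contra hne
    have hk := keyP (p := 0) (q := 1) (f := phi u) (g := phi z) (by simp)
      (PowerSeries.X_pow_dvd_iff.mpr fun m hm => by
        interval_cases m
        rw [coeff_phi_zero, hz0]; simp)
    rw [show (0 : ℕ) + 1 = 1 by omega] at hk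
    have hzero : PowerSeries.coeff 1 (phi u * phi z) = 0 :=
      PowerSeries.X_pow_dvd_iff.mp hdvd 1 (by omega)
    rw [hzero] at hk
    exact hne (by
      rcases mul_eq_zero.mp hk.symm with h | h
      · exact h
      · exact absurd h hzc1)
  have hXu : (PowerSeries.X : PowerSeries ℂ) ^ 1 ∣ phi u :=
    PowerSeries.X_pow_dvd_iff.mpr fun m hm => by interval_cases m; exact h0
  have h1 : PowerSeries.coeff 1 (phi u) = 0 := by
    by_contra hne
    have hk := keyP (p := 1) (q := 1) (f := phi u) (g := phi z) hXu
      (PowerSeries.X_pow_dvd_iff.mpr fun m hm => by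
        interval_cases m
        rw [coeff_phi_zero, hz0]; simp)
    have hzero : PowerSeries.coeff 2 (phi u * phi z) = 0 :=
      PowerSeries.X_pow_dvd_iff.mp hdvd 2 (by omega)
    rw [show (1 : ℕ) + 1 = 2 by omega] at hk
    rw [hzero] at hk
    exact hne (by
      rcases mul_eq_zero.mp hk.symm with h | h
      · exact h
      · exact absurd h hzc1)
  have hu00 : MvPowerSeries.coeff (fe 0 0) u = 0 := by
    rw [coeff_phi_zero] at h0
    exact_mod_cast h0
  rw [coeff_phi_one] at h1
  obtain ⟨hu10, hu01⟩ := complex_split h1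
  exact J_le_pow 2 (mem_J2_of u hu00 hu10 hu01)

lemma xx_mem_mm : xx ∈ mm := Ideal.subset_span (by simp)
lemma yy_mem_mm : yy ∈ mm := Ideal.subset_span (by simp)

lemma sq_mul_mem {u p : R} (hu : u ∈ mm ^ 2) (hp : p ∈ mm) : u * p ∈ II :=
  m3_le_II (by rw [pow_succ]; exact Ideal.mul_mem_mul hu hp)

lemma part1 : Submodule.colon II mm = mm ^ 2 := by
  refine le_antisymm (fun u hu => ?_) (fun u hu => Submodule.mem_colon.mpr fun p hp => ?_)
  · have hux : u * xx ∈ II := by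
      have := Submodule.mem_colon.mp hu xx xx_mem_mm
      rwa [smul_eq_mul] at this
    exact key_colon xx_mem_mm xx_not_mem_sq hux
  · rw [smul_eq_mul]
    exact sq_mul_mem hu hp

lemma part2 (z : R) (hz : z ∈ mm) (hz2 : z ∉ mm ^ 2) :
    Submodule.colon II (Ideal.span {z}) = Submodule.colon II mm := by
  rw [part1]
  refine le_antisymm (fun u hu => ?_) (fun u hu => Submodule.mem_colon.mpr fun p hp => ?_)
  · have huz : u * z ∈ II := by
      have := Submodule.mem_colon.mp hu z (Ideal.subset_span rfl)
      rwa [smul_eq_mul] at this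
    exact key_colon hz hz2 huz
  · obtain ⟨t, rfl⟩ := Ideal.mem_span_singleton'.mp hp
    rw [smul_eq_mul, show u * (t * z) = t * (u * z) by ring]
    exact Ideal.mul_mem_left _ _ (sq_mul_mem hu hz)

lemma part3 (a : R) (h : IsIntegralOverIdeal II a) : a ∈ II := by
  classical
  obtain ⟨k, c, hk, hc, heq⟩ := h
  set A := phi a with hA
  have heq' : A ^ k + ∑ i ∈ Finset.Icc 1 k, phi (c i) * A ^ (k - i) = 0 := by
    have := congrArg phi heq
    rw [map_add, map_pow, map_sum, map_zero] at this
    simpa [map_mul, map_pow] using this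
  have hX3 : (PowerSeries.X : PowerSeries ℂ) ^ 3 ∣ A := by
    by_contra hnd
    rw [PowerSeries.X_pow_dvd_iff] at hnd
    push_neg at hnd
    obtain ⟨m, hm3, hmne⟩ := hnd
    have hex : ∃ j, PowerSeries.coeff j A ≠ 0 := ⟨m, hmne⟩
    set n := Nat.find hex with hn_def
    have hn : PowerSeries.coeff n A ≠ 0 := Nat.find_spec hex
    have hn3 : n < 3 := lt_of_le_of_lt (Nat.find_min' hex hmne) hm3
    have hXn : (PowerSeries.X : PowerSeries ℂ) ^ n ∣ A :=
      PowerSeries.X_pow_dvd_iff.mpr fun j hj => not_not.mp (Nat.find_min hex hj)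
    have hck : PowerSeries.coeff (k * n) (A ^ k) = (PowerSeries.coeff n A) ^ k :=
      (keyPow hXn k).2
    have hterm : ∀ i ∈ Finset.Icc 1 k,
        PowerSeries.coeff (k * n) (phi (c i) * A ^ (k - i)) = 0 := by
      intro i hi
      rw [Finset.mem_Icc] at hi
      have h1 : (PowerSeries.X : PowerSeries ℂ) ^ (3 * i) ∣ phi (c i) :=
        phi_mem_of_mem_II_pow (hc i (Finset.mem_Icc.mpr hi))
      have h2 : (PowerSeries.X : PowerSeries ℂ) ^ ((k - i) * n) ∣ A ^ (k - i) :=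
        (keyPow hXn (k - i)).1
      have h3 : (PowerSeries.X : PowerSeries ℂ) ^ (3 * i + (k - i) * n)
          ∣ phi (c i) * A ^ (k - i) := by
        rw [pow_add]
        exact mul_dvd_mul h1 h2
      have hlt : k * n < 3 * i + (k - i) * n := by
        have hkn : k * n = i * n + (k - i) * n := by
          rw [← add_mul, Nat.add_sub_cancel' hi.2]
        have hin : i * n < 3 * i := by
          calc i * n ≤ i * 2 := Nat.mul_le_mul_left i (by omega)
            _ < 3 * i := by omega
        omega
      exact PowerSeries.X_pow_dvd_iff.mp h3 (k * n) hlt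
    have hcoeff := congrArg (PowerSeries.coeff (k * n)) heq'
    rw [map_add, map_sum, map_zero, hck, Finset.sum_eq_zero hterm, add_zero] at hcoeff
    exact hn (pow_eq_zero_iff (by omega) |>.mp hcoeff)
  have hA0 := PowerSeries.X_pow_dvd_iff.mp hX3 0 (by omega)
  have hA1 := PowerSeries.X_pow_dvd_iff.mp hX3 1 (by omega)
  have hA2 := PowerSeries.X_pow_dvd_iff.mp hX3 2 (by omega)
  rw [coeff_phi_zero] at hA0
  rw [coeff_phi_one] at hA1
  rw [coeff_phi_two] at hA2
  have ha00 : MvPowerSeries.coeff (fe 0 0) a = 0 := by exact_mod_cast hA0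
  obtain ⟨ha10, ha01⟩ := complex_split hA1
  have hA2' : ((MvPowerSeries.coeff (fe 2 0) a - MvPowerSeries.coeff (fe 0 2) a : ℝ) : ℂ)
      + ((MvPowerSeries.coeff (fe 1 1) a : ℝ) : ℂ) * Complex.I = 0 := by
    push_cast
    rw [← hA2]
    ring
  obtain ⟨ha2002, ha11⟩ := complex_split hA2'
  set lam := MvPowerSeries.coeff (fe 2 0) a with hlam
  have hsplit : a = (a - MvPowerSeries.C lam * (xx ^ 2 + yy ^ 2))
      + MvPowerSeries.C lam * (xx ^ 2 + yy ^ 2) := by ring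
  have hcg : ∀ d : Fin 2 →₀ ℕ, MvPowerSeries.coeff d (xx ^ 2 + yy ^ 2)
      = (if d = fe 2 0 then 1 else 0) + (if d = fe 0 2 then 1 else 0) := by
    intro d
    rw [map_add, xx, yy, X_pow_eq, X_pow_eq, MvPowerSeries.coeff_monomial,
      MvPowerSeries.coeff_monomial,
      show single (0 : Fin 2) 2 = fe 2 0 by simp [fe],
      show single (1 : Fin 2) 2 = fe 0 2 by simp [fe]]
  have hg : a - MvPowerSeries.C lam * (xx ^ 2 + yy ^ 2) ∈ J 3 := by
    intro d hd
    simp only [deg] at hd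
    rw [map_sub, MvPowerSeries.coeff_C_mul, hcg]
    have hcase : (d 0 = 0 ∧ d 1 = 0) ∨ (d 0 = 1 ∧ d 1 = 0) ∨ (d 0 = 0 ∧ d 1 = 1)
        ∨ (d 0 = 2 ∧ d 1 = 0) ∨ (d 0 = 1 ∧ d 1 = 1) ∨ (d 0 = 0 ∧ d 1 = 2) := by omega
    rw [← fe_spec d]
    have hlam02 : MvPowerSeries.coeff (fe 0 2) a = lam := by rw [hlam]; linarith [ha2002]
    rcases hcase with ⟨ha, hb⟩ | ⟨ha, hb⟩ | ⟨ha, hb⟩ | ⟨ha, hb⟩ | ⟨ha, hb⟩ | ⟨ha, hb⟩ <;>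
      rw [ha, hb]
    · norm_num [fe_inj, ha00]
    · norm_num [fe_inj, ha10]
    · norm_num [fe_inj, ha01]
    · simp [fe_inj, ← hlam]
    · norm_num [fe_inj, ha11]
    · simp [fe_inj, hlam02]
  rw [hsplit]
  exact add_mem (m3_le_II (J_le_pow 3 hg))
    (Ideal.mul_mem_left _ _ (Ideal.subset_span (by simp)))

lemma part4 (n : ℕ) : II ≠ mm ^ n := by
  intro h
  match n with
  | 0 =>
    have h1 : (1 : R) ∈ II := by rw [h, pow_zero, Ideal.one_eq_top]; trivial
    have := II_le_J2 h1 (fe 0 0) (by rw [deg_fe]; omega)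
    rw [MvPowerSeries.coeff_one, if_pos (by simp [fe])] at this
    exact one_ne_zero this
  | 1 =>
    have h1 : yy ∈ II := by rw [h, pow_one]; exact yy_mem_mm
    have := II_le_J2 h1 (fe 0 1) (by rw [deg_fe]; omega)
    rw [show fe 0 1 = single (1 : Fin 2) 1 by simp [fe], yy, MvPowerSeries.coeff_X,
      if_pos rfl] at this
    exact one_ne_zero this
  | 2 =>
    have h1 : xx * yy ∈ II := by
      rw [h, pow_two]
      exact Ideal.mul_mem_mul xx_mem_mm yy_mem_mm
    have hd : (PowerSeries.X : PowerSeries ℂ) ^ 3 ∣ phi (xx * yy) := by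
      have := phi_mem_of_mem_II_pow (i := 1) (by rwa [pow_one])
      rwa [mul_one] at this
    have hz := PowerSeries.X_pow_dvd_iff.mp hd 2 (by omega)
    rw [map_mul, phi_xx, phi_yy, mul_smul_comm, ← pow_two, map_smul,
      PowerSeries.coeff_X_pow, if_pos rfl, smul_eq_mul, mul_one] at hz
    exact Complex.I_ne_zero hz
  | (n + 3) =>
    have h1 : xx ^ 2 + yy ^ 2 ∈ II := Ideal.subset_span (by simp)
    rw [h] at h1
    have h2 : xx ^ 2 + yy ^ 2 ∈ mm ^ 3 := Ideal.pow_le_pow_right (by omega) h1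
    have h3 := pow_le_J 3 h2 (fe 2 0) (by rw [deg_fe]; omega)
    rw [map_add, xx, yy, X_pow_eq, X_pow_eq, MvPowerSeries.coeff_monomial,
      MvPowerSeries.coeff_monomial, if_pos (by simp [fe]),
      if_neg (by rw [show single (1:Fin 2) 2 = fe 0 2 by simp [fe], fe_inj]; omega)] at h3
    norm_num at h3

end S5


/-- Remark 3.5. In `R = ℝ[[x,y]]` with maximal ideal
`m = (x,y)`, the ideal `I = (x³, x²y, x² + y²)` satisfies
`(I : z) = (I : m) = m²` for every `z ∈ m \ m²`, is integrally closed, and is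
not a power of `m`.  (In particular, an integrally closed `m`-primary ideal of
a two-dimensional regular local ring can be contracted from `R[m/z]` for every
`z ∈ m \ m²` without being a power of `m`.) -/
theorem stmt_5 :
    letI R := MvPowerSeries (Fin 2) ℝ
    letI x : R := MvPowerSeries.X 0
    letI y : R := MvPowerSeries.X 1
    letI m : Ideal R := Ideal.span {x, y}
    letI I : Ideal R := Ideal.span {x ^ 3, x ^ 2 * y, x ^ 2 + y ^ 2}
    Submodule.colon I m = m ^ 2 ∧
    (∀ z : R, z ∈ m → z ∉ m ^ 2 →
      Submodule.colon I (Ideal.span {z}) = Submodule.colon I m) ∧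
    (∀ a : R, IsIntegralOverIdeal I a → a ∈ I) ∧
    (∀ n : ℕ, I ≠ m ^ n) := by
  exact ⟨S5.part1, fun z hz hz2 => S5.part2 z hz hz2, fun a h => S5.part3 a h, S5.part4⟩
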